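/- Stubborn Complex Roots Theorem (proved special case): let P(λ) = ∏_{i=1}^{n−2} (p_i − λ) · (λ − (a+bi))(λ − (a−bi)) up to sign, where p₁, ..., p_{n−2} are positive reals, a, b are reals with |a| > |b| and b ≠ 0, and let Q(λ) = c(q₁ − λ) with q₁ > 0 and c real. Suppose |P(0)| > |Q(0)| and that the smallest p_i satisfies min_i p_i < q₁. Then the number of roots (with multiplicity) of S = P + Q with strictly negative real part equals the number of roots of P with strictly negative real part, and likewise for strictly positive real part. In particular, if additionally a > 0, then every root of S has strictly positive real part. -/

import Mathlib

open Polynomial Complex Filter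

/-- minimum of a nonempty multiset w.r.t. a real-valued function -/
lemma multiset_exists_min {α : Type*} (f : α → ℝ) (s : Multiset α) (hs : s ≠ 0) :
    ∃ a ∈ s, ∀ b ∈ s, f a ≤ f b := by
  induction s using Multiset.induction_on with
  | empty => exact absurd rfl hs
  | cons a s ih =>
    rcases eq_or_ne s 0 with rfl | h
    · exact ⟨a, Multiset.mem_cons_self a 0, by simp⟩
    · obtain ⟨m, hm, hmin⟩ := ih h
      rcases le_total (f a) (f m) with h1 | h1
      · exact ⟨a, Multiset.mem_cons_self a s, by
          intro b hb
          rcases Multiset.mem_cons.1 hb with rfl | hb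
          · exact le_rfl
          · exact h1.trans (hmin b hb)⟩
      · exact ⟨m, Multiset.mem_cons_of_mem hm, by
          intro b hb
          rcases Multiset.mem_cons.1 hb with rfl | hb
          · exact h1
          · exact hmin b hb⟩

/-- positive lower bound for a multiset of positive reals -/
lemma multiset_pos_lb (s : Multiset ℝ) (h : ∀ x ∈ s, 0 < x) :
    ∃ ρ > 0, ∀ x ∈ s, ρ ≤ x := by
  rcases eq_or_ne s 0 with rfl | hs
  · exact ⟨1, one_pos, by simp⟩
  · obtain ⟨m, hm, hmin⟩ := multiset_exists_min id s hs
    exact ⟨m, h m hm, hmin⟩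

/-- cardinalities of filters match across a multiset relation compatible with predicates -/
lemma rel_filter_card {α β : Type*} {r : α → β → Prop} {pa : α → Prop} {pb : β → Prop}
    [DecidablePred pa] [DecidablePred pb]
    (hcompat : ∀ a b, r a b → (pa a ↔ pb b)) :
    ∀ {s : Multiset α} {t : Multiset β}, Multiset.Rel r s t →
      Multiset.card (s.filter pa) = Multiset.card (t.filter pb) := by
  intro s t h
  induction h with
  | zero => simp
  | @cons a b s t hab _ ih =>
    by_cases hpa : pa a
    · rw [Multiset.filter_cons_of_pos _ hpa,
        Multiset.filter_cons_of_pos _ ((hcompat a b hab).1 hpa)]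
      simp [ih]
    · rw [Multiset.filter_cons_of_neg _ hpa,
        Multiset.filter_cons_of_neg _ (fun hpb => hpa ((hcompat a b hab).2 hpb)), ih]

lemma pow_card_le_prod_real (a : ℝ) (ha : 0 ≤ a) :
    ∀ (s : Multiset ℝ), (∀ x ∈ s, a ≤ x) → a ^ Multiset.card s ≤ s.prod := by
  intro s
  induction s using Multiset.induction_on with
  | empty => simp
  | cons x s ih =>
    intro h
    rw [Multiset.card_cons, Multiset.prod_cons, pow_succ, mul_comm (a ^ Multiset.card s) a]
    have h1 : a ≤ x := h x (Multiset.mem_cons_self x s)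
    have h2 : a ^ Multiset.card s ≤ s.prod := ih fun y hy => h y (Multiset.mem_cons_of_mem hy)
    exact mul_le_mul h1 h2 (pow_nonneg ha _) (ha.trans h1)

lemma exists_root_close (g : ℂ[X]) (hg : g.Monic) (hd : 0 < g.natDegree) (z₀ : ℂ) :
    ∃ r ∈ g.roots, dist z₀ r ^ g.natDegree ≤ ‖g.eval z₀‖ := by
  have hsplit : Splits g := IsAlgClosed.splits g
  have hcard : g.roots.card = g.natDegree := (splits_iff_card_roots).1 hsplit
  have hne : g.roots ≠ 0 := by
    intro h0
    rw [h0] at hcard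
    simp at hcard
    omega
  obtain ⟨r, hr, hmin⟩ := multiset_exists_min (dist z₀ ·) g.roots hne
  refine ⟨r, hr, ?_⟩
  have hfact := hsplit.eq_prod_roots_of_monic hg
  have heval : ‖g.eval z₀‖ = (g.roots.map (fun s => dist z₀ s)).prod := by
    conv_lhs => rw [hfact]
    rw [eval_multiset_prod, show ∀ m : Multiset ℂ, ‖m.prod‖ = (m.map (‖·‖)).prod from
      fun m => map_multiset_prod (normHom (α := ℂ)) m]
    rw [Multiset.map_map, Multiset.map_map]
    congr 1
    apply Multiset.map_congr rfl
    intro x _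
    simp [Complex.dist_eq]
  rw [heval, ← hcard]
  have hc2 : g.roots.card = Multiset.card (g.roots.map (fun s => dist z₀ s)) := by simp
  rw [hc2]
  apply pow_card_le_prod_real _ dist_nonneg
  intro x hx
  obtain ⟨s, hs, rfl⟩ := Multiset.mem_map.1 hx
  exact hmin s hs


section
variable {ι : Type*}

lemma roots_rel_of_tendsto (n : ℕ) :
    ∀ (l : Filter ι) (G : ι → ℂ[X]) (g : ℂ[X]), g.Monic → g.natDegree = n →
    (∀ i, (G i).Monic) → (∀ i, (G i).natDegree = n) →
    (∀ j, Tendsto (fun i => (G i).coeff j) l (nhds (g.coeff j))) →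
    ∀ ρ > 0, ∀ᶠ i in l, Multiset.Rel (fun x y => dist x y < ρ) (G i).roots g.roots := by
  induction n with
  | zero =>
    intro l G g hg hgd hG hGd _ ρ hρ
    have h1 : g = 1 := hg.natDegree_eq_zero.1 hgd
    refine Filter.Eventually.of_forall fun i => ?_
    have h2 : G i = 1 := (hG i).natDegree_eq_zero.1 (hGd i)
    rw [h1, h2, roots_one]
    exact Multiset.Rel.zero
  | succ n ih =>
    intro l G g hg hgd hG hGd hcoeff ρ hρ
    -- pick a root of g
    obtain ⟨z₀, hz₀⟩ : ∃ z, g.IsRoot z := by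
      apply Complex.exists_root
      rw [degree_eq_natDegree hg.ne_zero, hgd]
      exact_mod_cast Nat.succ_pos n
    -- choose closest roots of G i
    have hGd' : ∀ i, 0 < (G i).natDegree := fun i => by rw [hGd i]; exact Nat.succ_pos n
    have hchoice : ∀ i, ∃ r ∈ (G i).roots,
        dist z₀ r ^ (G i).natDegree ≤ ‖(G i).eval z₀‖ :=
      fun i => exists_root_close (G i) (hG i) (hGd' i) z₀
    choose r hrmem hrd using hchoice
    -- eval at z₀ tends to 0
    have heval : Tendsto (fun i => (G i).eval z₀) l (nhds 0) := by
      have h1 : ∀ i, (G i).eval z₀ = ∑ j ∈ Finset.range (n + 2), (G i).coeff j * z₀ ^ j := by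
        intro i
        rw [eval_eq_sum_range' (n := n + 2) (by rw [hGd i]; omega)]
      have h2 : (0 : ℂ) = ∑ j ∈ Finset.range (n + 2), g.coeff j * z₀ ^ j := by
        rw [← eval_eq_sum_range' (n := n + 2) (by rw [hgd]; omega)]
        exact hz₀.symm
      simp only [h1]
      rw [h2]
      exact tendsto_finset_sum _ fun j _ => (hcoeff j).mul tendsto_const_nhds
    -- r tends to z₀
    have hr : Tendsto r l (nhds z₀) := by
      rw [Metric.tendsto_nhds]
      intro ε hε
      have : ∀ᶠ i in l, ‖(G i).eval z₀‖ < ε ^ (n + 1) := by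
        have := heval.norm
        simp only [norm_zero] at this
        exact (this.eventually_lt_const (pow_pos hε (n + 1)))
      filter_upwards [this] with i hi
      have h3 := hrd i
      rw [hGd i] at h3
      rw [dist_comm]
      have h4 : dist z₀ (r i) ^ (n + 1) < ε ^ (n + 1) := lt_of_le_of_lt h3 hi
      exact lt_of_pow_lt_pow_left₀ _ hε.le h4
    -- factor
    set H : ι → ℂ[X] := fun i => (G i) /ₘ (X - C (r i)) with hH
    set h : ℂ[X] := g /ₘ (X - C z₀) with hh
    have hGfact : ∀ i, (X - C (r i)) * H i = G i := fun i =>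
      mul_divByMonic_eq_iff_isRoot.2 (isRoot_of_mem_roots (hrmem i))
    have hgfact : (X - C z₀) * h = g := mul_divByMonic_eq_iff_isRoot.2 hz₀
    have hHmonic : ∀ i, (H i).Monic := fun i =>
      (monic_X_sub_C (r i)).of_mul_monic_left (by rw [hGfact i]; exact hG i)
    have hhmonic : h.Monic := (monic_X_sub_C z₀).of_mul_monic_left (by rw [hgfact]; exact hg)
    have hHdeg : ∀ i, (H i).natDegree = n := by
      intro i
      have := hGd i
      rw [← hGfact i, natDegree_mul (monic_X_sub_C (r i)).ne_zero (hHmonic i).ne_zero,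
        natDegree_X_sub_C] at this
      omega
    have hhdeg : h.natDegree = n := by
      have := hgd
      rw [← hgfact, natDegree_mul (monic_X_sub_C z₀).ne_zero hhmonic.ne_zero,
        natDegree_X_sub_C] at this
      omega
    -- coefficients of H tend to coefficients of h
    have hHcoeff : ∀ j, Tendsto (fun i => (H i).coeff j) l (nhds (h.coeff j)) := by
      intro j
      have h1 : ∀ i, (H i).coeff j =
          ∑ k ∈ Finset.Icc (j + 1) (n + 1), (r i) ^ (k - (j + 1)) * (G i).coeff k := by
        intro i
        rw [hH]
        rw [coeff_divByMonic_X_sub_C, hGd i]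
      have h2 : h.coeff j = ∑ k ∈ Finset.Icc (j + 1) (n + 1), z₀ ^ (k - (j + 1)) * g.coeff k := by
        rw [hh, coeff_divByMonic_X_sub_C, hgd]
      simp only [h1]
      rw [h2]
      exact tendsto_finset_sum _ fun k _ => (hr.pow _).mul (hcoeff k)
    -- apply IH
    have hrel := ih l H h hhmonic hhdeg hHmonic hHdeg hHcoeff ρ hρ
    have hclose : ∀ᶠ i in l, dist (r i) z₀ < ρ := by
      rw [Metric.tendsto_nhds] at hr
      exact hr ρ hρ
    filter_upwards [hrel, hclose] with i h1 h2
    have hroots : (G i).roots = (r i) ::ₘ (H i).roots := by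
      rw [← hGfact i, roots_mul (by rw [hGfact i]; exact (hG i).ne_zero), roots_X_sub_C,
        Multiset.singleton_add]
    have hgroots : g.roots = z₀ ::ₘ h.roots := by
      rw [← hgfact, roots_mul (by rw [hgfact]; exact hg.ne_zero), roots_X_sub_C,
        Multiset.singleton_add]
    rw [hroots, hgroots]
    exact Multiset.Rel.cons h2 h1
end


lemma const_of_locally_const {α : Type*} (N : ℝ → α)
    (h : ∀ t₀ ∈ Set.Icc (0:ℝ) 1, ∃ δ > 0, ∀ t, |t - t₀| < δ → N t = N t₀) :
    N 1 = N 0 := by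
  set A : Set ℝ := {t | t ∈ Set.Icc (0:ℝ) 1 ∧ N t = N 0} with hA
  have h0A : (0:ℝ) ∈ A := ⟨⟨le_refl 0, zero_le_one⟩, rfl⟩
  have hne : A.Nonempty := ⟨0, h0A⟩
  have hbdd : BddAbove A := ⟨1, fun t ht => ht.1.2⟩
  set T := sSup A with hT
  have hT0 : 0 ≤ T := le_csSup hbdd h0A
  have hT1 : T ≤ 1 := csSup_le hne fun t ht => ht.1.2
  obtain ⟨δ, hδ, hloc⟩ := h T ⟨hT0, hT1⟩
  -- N T = N 0
  obtain ⟨s, hsA, hs⟩ : ∃ s ∈ A, T - δ < s := exists_lt_of_lt_csSup hne (by linarith)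
  have hsT : s ≤ T := le_csSup hbdd hsA
  have hNT : N T = N 0 := by
    rw [← hsA.2]
    exact (hloc s (by rw [abs_sub_lt_iff]; constructor <;> linarith)).symm
  rcases eq_or_lt_of_le hT1 with hT1' | hT1'
  · rw [← hT1', hNT]
  · exfalso
    set t' := min 1 (T + δ / 2) with ht'
    have ht'T : T < t' := lt_min hT1' (by linarith)
    have ht'mem : t' ∈ Set.Icc (0:ℝ) 1 := ⟨by positivity, min_le_left _ _⟩
    have ht'close : |t' - T| < δ := by
      rw [abs_sub_lt_iff]
      constructor
      · have : t' ≤ T + δ / 2 := min_le_right _ _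
        linarith
      · linarith
    have : t' ∈ A := ⟨ht'mem, by rw [hloc t' ht'close, hNT]⟩
    exact absurd (le_csSup hbdd this) (not_le.2 ht'T)


lemma chain_lemma (cabs q₁ Pp ab2 E pi₀ W Fi₀ PT G : ℝ)
    (h0 : cabs * q₁ < Pp * ab2) (hPp : E * pi₀ = Pp)
    (h2 : pi₀ * W ≤ q₁ * Fi₀) (h3 : ab2 ≤ G) (hprod : E * Fi₀ ≤ PT)
    (hq₁ : 0 < q₁) (hW : 0 < W) (hE : 0 ≤ E) (hab2 : 0 ≤ ab2) (hPT : 0 ≤ PT) :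
    cabs * W < PT * G := by
  refine lt_of_mul_lt_mul_right ?_ hq₁.le
  calc cabs * W * q₁ = (cabs * q₁) * W := by ring
    _ < (Pp * ab2) * W := mul_lt_mul_of_pos_right h0 hW
    _ = (E * ab2) * (pi₀ * W) := by rw [← hPp]; ring
    _ ≤ (E * ab2) * (q₁ * Fi₀) := mul_le_mul_of_nonneg_left h2 (mul_nonneg hE hab2)
    _ = ((E * Fi₀) * ab2) * q₁ := by ring
    _ ≤ (PT * G) * q₁ := mul_le_mul_of_nonneg_right (mul_le_mul hprod h3 hab2 hPT) hq₁.le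

lemma key_ineq {m : ℕ} (p : Fin m → ℝ) (hp : ∀ i, 0 < p i) (a b q₁ c : ℝ)
    (hab : |b| < |a|) (hq₁ : 0 < q₁)
    (h0 : |c| * q₁ < (∏ i, p i) * (a ^ 2 + b ^ 2))
    (i₀ : Fin m) (hi₀ : p i₀ < q₁)
    (z : ℂ) (hx : z.re ≤ 0) (hxa : a ^ 2 ≤ (z.re - a) ^ 2) :
    |c| * ‖(q₁ : ℂ) - z‖ <
      (∏ i, ‖(p i : ℂ) - z‖) *
        (‖z - ((a : ℂ) + b * I)‖ * ‖z - ((a : ℂ) - b * I)‖) := by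
  have sq_le : ∀ u v : ℝ, 0 ≤ u → 0 ≤ v → u ^ 2 ≤ v ^ 2 → u ≤ v := by
    intro u v hu hv h; nlinarith
  have habs : ∀ t : ℝ, (‖(t : ℂ) - z‖) ^ 2 = (t - z.re) ^ 2 + z.im ^ 2 := by
    intro t
    rw [Complex.sq_norm, Complex.normSq_apply]
    simp
    ring
  have hb2 : b ^ 2 ≤ a ^ 2 := by
    nlinarith [abs_nonneg b, abs_nonneg a, _root_.sq_abs a, _root_.sq_abs b]
  have hG1 : (‖z - ((a : ℂ) + b * I)‖) ^ 2 = (z.re - a) ^ 2 + (z.im - b) ^ 2 := by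
    rw [Complex.sq_norm, Complex.normSq_apply]
    simp
    ring
  have hG2 : (‖z - ((a : ℂ) - b * I)‖) ^ 2 = (z.re - a) ^ 2 + (z.im + b) ^ 2 := by
    rw [Complex.sq_norm, Complex.normSq_apply]
    simp
    ring
  have h1 : ∀ i, p i ≤ ‖(p i : ℂ) - z‖ := by
    intro i
    apply sq_le _ _ (hp i).le (norm_nonneg _)
    rw [habs]
    nlinarith [hp i, sq_nonneg z.im, sq_nonneg z.re, mul_nonneg (neg_nonneg.2 hx) (hp i).le]
  have h2 : p i₀ * ‖(q₁ : ℂ) - z‖ ≤ q₁ * ‖(p i₀ : ℂ) - z‖ := by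
    apply sq_le
    · exact mul_nonneg (hp i₀).le (norm_nonneg _)
    · exact mul_nonneg hq₁.le (norm_nonneg _)
    · rw [mul_pow, mul_pow, habs, habs]
      have e1 : 0 ≤ z.re * (p i₀ - q₁) := by nlinarith [hp i₀]
      have e2 : 0 ≤ 2 * p i₀ * q₁ - z.re * (p i₀ + q₁) := by nlinarith [hp i₀]
      nlinarith [mul_nonneg e1 e2, mul_nonneg (sq_nonneg z.im)
        (by nlinarith [hp i₀] : (0:ℝ) ≤ q₁ ^ 2 - p i₀ ^ 2)]
  have h3 : a ^ 2 + b ^ 2 ≤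
      ‖z - ((a : ℂ) + b * I)‖ * ‖z - ((a : ℂ) - b * I)‖ := by
    apply sq_le _ _ (by positivity)
      (mul_nonneg (norm_nonneg _) (norm_nonneg _))
    rw [mul_pow, hG1, hG2]
    have h4 : a ^ 2 * a ^ 2 ≤ (z.re - a) ^ 2 * (z.re - a) ^ 2 :=
      mul_le_mul hxa hxa (sq_nonneg a) (sq_nonneg _)
    have h5 : a ^ 2 * (z.im ^ 2 + b ^ 2) ≤ (z.re - a) ^ 2 * (z.im ^ 2 + b ^ 2) :=
      mul_le_mul_of_nonneg_right hxa (by positivity)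
    nlinarith [sq_nonneg z.im, sq_nonneg (z.im ^ 2),
      mul_nonneg (sq_nonneg z.im) (sub_nonneg.2 hb2)]
  have hWpos : 0 < ‖(q₁ : ℂ) - z‖ := by
    have hq : q₁ ≤ ‖(q₁ : ℂ) - z‖ := by
      apply sq_le _ _ hq₁.le (norm_nonneg _)
      rw [habs]
      nlinarith [sq_nonneg z.im]
    linarith
  have hprod : (∏ i ∈ Finset.univ.erase i₀, p i) * ‖(p i₀ : ℂ) - z‖ ≤
      ∏ i, ‖(p i : ℂ) - z‖ := by
    rw [← Finset.mul_prod_erase Finset.univ (fun i => ‖(p i : ℂ) - z‖)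
      (Finset.mem_univ i₀), mul_comm]
    exact mul_le_mul_of_nonneg_left
      (Finset.prod_le_prod (fun i _ => (hp i).le) (fun i _ => h1 i))
      (norm_nonneg _)
  exact chain_lemma _ _ _ _ _ _ _ _ _ _ h0
    (by rw [← Finset.mul_prod_erase Finset.univ p (Finset.mem_univ i₀), mul_comm])
    h2 h3 hprod hq₁ hWpos (Finset.prod_nonneg fun i _ => (hp i).le) (by positivity)
    (Finset.prod_nonneg fun i _ => norm_nonneg _)



/-- **Stubborn Complex Roots Theorem (proved special case).**  Let
`P(λ) = ε · ∏_{i=1}^{n−2} (pᵢ − λ) · (λ − (a+bi)) (λ − (a−bi))` (with sign `ε = ±1`),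
where `p₁, …, p_{n−2}` are positive reals, `a, b` are reals with `|a| > |b|` and
`b ≠ 0`, and `Q(λ) = c (q₁ − λ)` with `q₁ > 0` and `c` real, `c ≠ 0`.  If
`|P(0)| > |Q(0)|` and the smallest `pᵢ` satisfies `min pᵢ < q₁`, then `S = P + Q` has
the same number of roots (with multiplicity) with strictly negative (resp. strictly
positive) real part as `P`; in particular, if moreover `a > 0`, every root of `S` has
strictly positive real part. -/
theorem stubborn_complex_roots_special_case (n : ℕ) (hn : 3 ≤ n)
    (p : Fin (n - 2) → ℝ) (hp : ∀ i, 0 < p i)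
    (a b : ℝ) (hab : |b| < |a|) (hb : b ≠ 0)
    (q₁ c : ℝ) (hq₁ : 0 < q₁) (hc : c ≠ 0)
    (ε : ℝ) (hε : ε = 1 ∨ ε = -1)
    (P Q : Polynomial ℂ)
    (hP : P = Polynomial.C (ε : ℂ) *
      ((∏ i, (Polynomial.C ((p i : ℝ) : ℂ) - Polynomial.X)) *
        ((Polynomial.X - Polynomial.C (↑a + ↑b * Complex.I)) *
          (Polynomial.X - Polynomial.C (↑a - ↑b * Complex.I)))))
    (hQ : Q = Polynomial.C (c : ℂ) * (Polynomial.C ((q₁ : ℝ) : ℂ) - Polynomial.X))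
    (h0 : ‖Q.eval 0‖ < ‖P.eval 0‖)
    (hmin : ∃ i, p i < q₁) :
    (Multiset.card (((P + Q).roots).filter fun z => z.re < 0) =
        Multiset.card ((P.roots).filter fun z => z.re < 0)) ∧
    (Multiset.card (((P + Q).roots).filter fun z => 0 < z.re) =
        Multiset.card ((P.roots).filter fun z => 0 < z.re)) ∧
    (0 < a → ∀ z : ℂ, (P + Q).eval z = 0 → 0 < z.re) := by
  obtain ⟨i₀, hi₀⟩ := hmin
  have hεne : ((ε : ℝ) : ℂ) ≠ 0 := by
    rcases hε with h | h <;> simp [h]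
  have hε1 : ‖((ε : ℝ) : ℂ)‖ = 1 := by
    rcases hε with h | h <;> simp [h]
  have hcne : ((c : ℝ) : ℂ) ≠ 0 := Complex.ofReal_ne_zero.2 hc
  -- eval formulas
  have habsP : ∀ z : ℂ, ‖P.eval z‖ =
      (∏ i, ‖(p i : ℂ) - z‖) *
        (‖z - ((a : ℂ) + b * I)‖ * ‖z - ((a : ℂ) - b * I)‖) := by
    intro z
    rw [hP]
    simp only [eval_mul, eval_C, eval_prod, eval_sub, eval_X]
    rw [norm_mul, norm_mul, norm_mul, hε1, one_mul, norm_prod]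
  have habsQ : ∀ z : ℂ, ‖Q.eval z‖ = |c| * ‖(q₁ : ℂ) - z‖ := by
    intro z
    rw [hQ]
    simp only [eval_mul, eval_C, eval_sub, eval_X]
    rw [norm_mul, Complex.norm_real, Real.norm_eq_abs]
  -- numeric form of h0
  have hpair0 : ‖(0 : ℂ) - ((a : ℂ) + b * I)‖ *
      ‖(0 : ℂ) - ((a : ℂ) - b * I)‖ = a ^ 2 + b ^ 2 := by
    rw [← norm_mul]
    have : ((0 : ℂ) - ((a : ℂ) + b * I)) * ((0 : ℂ) - ((a : ℂ) - b * I)) =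
        (((a ^ 2 + b ^ 2 : ℝ)) : ℂ) := by
      push_cast
      ring_nf
      rw [Complex.I_sq]
      ring
    rw [this, Complex.norm_real, Real.norm_eq_abs, _root_.abs_of_nonneg (by positivity)]
  have h0' : |c| * q₁ < (∏ i, p i) * (a ^ 2 + b ^ 2) := by
    have h1 := h0
    rw [habsP 0, habsQ 0, hpair0] at h1
    have h2 : ‖(q₁ : ℂ) - 0‖ = q₁ := by
      rw [sub_zero, Complex.norm_real, Real.norm_eq_abs, _root_.abs_of_nonneg hq₁.le]
    have h3 : (∏ i, ‖(p i : ℂ) - 0‖) = ∏ i, p i := by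
      apply Finset.prod_congr rfl
      intro i _
      rw [sub_zero, Complex.norm_real, Real.norm_eq_abs, _root_.abs_of_nonneg (hp i).le]
    rw [h2, h3] at h1
    exact h1
  -- key inequality in eval form
  have hkey : ∀ z : ℂ, z.re ≤ 0 → a ^ 2 ≤ (z.re - a) ^ 2 →
      ‖Q.eval z‖ < ‖P.eval z‖ := by
    intro z h1 h2
    rw [habsP, habsQ]
    exact key_ineq p hp a b q₁ c hab hq₁ h0' i₀ hi₀ z h1 h2
  -- degrees
  have hPne : P ≠ 0 := by
    rw [hP]
    refine mul_ne_zero (by simpa using hεne) (mul_ne_zero ?_ (mul_ne_zero ?_ ?_))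
    · rw [Finset.prod_ne_zero_iff]
      intro i _
      intro h
      have := X_sub_C_ne_zero (R := ℂ) ((p i : ℝ) : ℂ)
      apply this
      have : -(Polynomial.C ((p i : ℝ) : ℂ) - X) = 0 := by rw [h, neg_zero]
      rwa [neg_sub] at this
    · exact X_sub_C_ne_zero _
    · exact X_sub_C_ne_zero _
  have hdegA : (∏ i, (Polynomial.C ((p i : ℝ) : ℂ) - X)).natDegree = n - 2 := by
    rw [natDegree_prod]
    · have : ∀ i : Fin (n - 2), (Polynomial.C ((p i : ℝ) : ℂ) - X).natDegree = 1 := by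
        intro i
        have h : Polynomial.C ((p i : ℝ) : ℂ) - X = -(X - Polynomial.C ((p i : ℝ) : ℂ)) := by
          ring
        rw [h, natDegree_neg, natDegree_X_sub_C]
      simp [this]
    · intro i _
      intro h
      apply X_sub_C_ne_zero (R := ℂ) ((p i : ℝ) : ℂ)
      have : -(Polynomial.C ((p i : ℝ) : ℂ) - X) = 0 := by rw [h, neg_zero]
      rwa [neg_sub] at this
  have hdegP : P.natDegree = n := by
    rw [hP, natDegree_C_mul hεne, natDegree_mul, hdegA, natDegree_mul, natDegree_X_sub_C,
      natDegree_X_sub_C]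
    · omega
    · exact X_sub_C_ne_zero _
    · exact X_sub_C_ne_zero _
    · rw [hP] at hPne
      intro h
      apply hPne
      simp [h]
    · exact mul_ne_zero (X_sub_C_ne_zero _) (X_sub_C_ne_zero _)
  have hdegQ : Q.natDegree = 1 := by
    rw [hQ, natDegree_C_mul hcne]
    have h : Polynomial.C ((q₁ : ℝ) : ℂ) - X = -(X - Polynomial.C ((q₁ : ℝ) : ℂ)) := by ring
    rw [h, natDegree_neg, natDegree_X_sub_C]
  -- the homotopy family
  set S : ℝ → ℂ[X] := fun t => P + Polynomial.C ((t : ℝ) : ℂ) * Q with hS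
  have hQcoeffn : Q.coeff n = 0 := coeff_eq_zero_of_natDegree_lt (by rw [hdegQ]; omega)
  have hScoeff : ∀ t : ℝ, (S t).coeff n = P.coeff n := by
    intro t
    simp [hS, coeff_add, coeff_C_mul, hQcoeffn]
  have hlc : P.coeff n ≠ 0 := by
    rw [← hdegP]
    exact fun h => hPne (leadingCoeff_eq_zero.1 h)
  have hSdeg : ∀ t : ℝ, (S t).natDegree = n := by
    intro t
    apply le_antisymm
    · refine (natDegree_add_le _ _).trans (max_le (le_of_eq hdegP) ?_)
      refine (natDegree_C_mul_le _ _).trans ?_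
      rw [hdegQ]; omega
    · exact le_natDegree_of_ne_zero (by rw [hScoeff]; exact hlc)
  set lc := P.coeff n with hlcdef
  have hlcinv : lc⁻¹ ≠ 0 := inv_ne_zero hlc
  set G : ℝ → ℂ[X] := fun t => Polynomial.C lc⁻¹ * S t with hG
  have hGdeg : ∀ t : ℝ, (G t).natDegree = n := by
    intro t
    rw [hG]
    simp only
    rw [natDegree_C_mul hlcinv, hSdeg]
  have hGmonic : ∀ t : ℝ, (G t).Monic := by
    intro t
    rw [Monic, Polynomial.leadingCoeff, hGdeg t, hG]
    simp only [coeff_C_mul]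
    rw [hScoeff, inv_mul_cancel₀ hlc]
  have hGroots : ∀ t : ℝ, (G t).roots = (S t).roots := fun t => roots_C_mul _ hlcinv
  have hGcoeff : ∀ (t₀ : ℝ) (j : ℕ),
      Filter.Tendsto (fun t => (G t).coeff j) (nhds t₀) (nhds ((G t₀).coeff j)) := by
    intro t₀ j
    have hco : ∀ t : ℝ, (G t).coeff j = lc⁻¹ * (P.coeff j + ((t : ℝ) : ℂ) * Q.coeff j) := by
      intro t
      simp [hG, hS, coeff_C_mul, coeff_add]
    simp only [hco]
    exact tendsto_const_nhds.mul (tendsto_const_nhds.add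
      (((Complex.continuous_ofReal.tendsto t₀)).mul tendsto_const_nhds))
  -- roots stay off the imaginary axis
  have haxis : ∀ t ∈ Set.Icc (0:ℝ) 1, ∀ z ∈ (S t).roots, z.re ≠ 0 := by
    intro t ht z hz hre
    have hzero : (S t).eval z = 0 := isRoot_of_mem_roots hz
    have hQP := hkey z (le_of_eq hre) (by rw [hre]; exact le_of_eq (by ring))
    have h1 : P.eval z = -(((t : ℝ) : ℂ) * Q.eval z) := by
      have h2 : P.eval z + ((t : ℝ) : ℂ) * Q.eval z = 0 := by
        simpa [hS, eval_add, eval_mul, eval_C] using hzero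
      linear_combination h2
    have h2 : ‖P.eval z‖ = ‖(t : ℂ)‖ * ‖Q.eval z‖ := by
      rw [h1, norm_neg, norm_mul]
    have h3 : ‖(t : ℂ)‖ ≤ 1 := by
      rw [Complex.norm_real, Real.norm_eq_abs, _root_.abs_of_nonneg ht.1]
      exact ht.2
    nlinarith [norm_nonneg (Q.eval z)]
  classical
  set F : ℝ → ℕ × ℕ := fun t =>
    (Multiset.card (((S t).roots).filter fun z => z.re < 0),
     Multiset.card (((S t).roots).filter fun z => 0 < z.re)) with hF
  have hlocal : ∀ t₀ ∈ Set.Icc (0:ℝ) 1, ∃ δ > 0, ∀ t, |t - t₀| < δ → F t = F t₀ := by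
    intro t₀ ht₀
    have hmem : ∀ x ∈ ((S t₀).roots).map (fun r => |r.re|), 0 < x := by
      intro x hx
      obtain ⟨r, hr, rfl⟩ := Multiset.mem_map.1 hx
      exact abs_pos.2 (haxis t₀ ht₀ r hr)
    obtain ⟨ρ, hρ, hρle⟩ := multiset_pos_lb _ hmem
    have hev := roots_rel_of_tendsto n (nhds t₀) G (G t₀) (hGmonic t₀) (hGdeg t₀)
      hGmonic hGdeg (hGcoeff t₀) ρ hρ
    rw [Metric.eventually_nhds_iff] at hev
    obtain ⟨δ, hδ, hd⟩ := hev
    refine ⟨δ, hδ, fun t ht => ?_⟩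
    have hrel := hd (show dist t t₀ < δ by rwa [Real.dist_eq])
    rw [hGroots, hGroots] at hrel
    have hrel2 : Multiset.Rel (fun x y => dist x y < ρ ∧ ρ ≤ |y.re|)
        ((S t).roots) ((S t₀).roots) := by
      refine hrel.mono fun x _ y hy hxy => ⟨hxy, hρle _ (Multiset.mem_map_of_mem _ hy)⟩
    have hkeycompat : ∀ (x y : ℂ), (dist x y < ρ ∧ ρ ≤ |y.re|) →
        (|x.re - y.re| < ρ ∧ ρ ≤ |y.re|) := by
      intro x y ⟨hd1, hd2⟩
      refine ⟨lt_of_le_of_lt ?_ hd1, hd2⟩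
      rw [Complex.dist_eq, ← Complex.sub_re]
      exact Complex.abs_re_le_norm _
    have hcompat1 : ∀ (x y : ℂ), (dist x y < ρ ∧ ρ ≤ |y.re|) → (x.re < 0 ↔ y.re < 0) := by
      intro x y h
      obtain ⟨h4, h2⟩ := hkeycompat x y h
      have h5 := abs_lt.1 h4
      rcases abs_cases y.re with ⟨he, hy0⟩ | ⟨he, hy0⟩ <;>
        (constructor <;> intro h6 <;> linarith)
    have hcompat2 : ∀ (x y : ℂ), (dist x y < ρ ∧ ρ ≤ |y.re|) → (0 < x.re ↔ 0 < y.re) := by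
      intro x y h
      obtain ⟨h4, h2⟩ := hkeycompat x y h
      have h5 := abs_lt.1 h4
      rcases abs_cases y.re with ⟨he, hy0⟩ | ⟨he, hy0⟩ <;>
        (constructor <;> intro h6 <;> linarith)
    simp only [hF, Prod.mk.injEq]
    exact ⟨rel_filter_card hcompat1 hrel2, rel_filter_card hcompat2 hrel2⟩
  have hconst := const_of_locally_const F hlocal
  have hS1 : S 1 = P + Q := by
    simp [hS]
  have hS0 : S 0 = P := by
    simp [hS]
  have hfst := congrArg Prod.fst hconst
  have hsnd := congrArg Prod.snd hconst
  simp only [hF, hS1, hS0] at hfst hsnd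
  refine ⟨hfst, hsnd, ?_⟩
  intro ha z hz
  by_contra hre
  push_neg at hre
  have hxa : a ^ 2 ≤ (z.re - a) ^ 2 := by nlinarith
  have hQPz := hkey z hre hxa
  have hPz : P.eval z = -(Q.eval z) := by
    have h2 : P.eval z + Q.eval z = 0 := by simpa [eval_add] using hz
    linear_combination h2
  rw [hPz, norm_neg] at hQPz
  exact lt_irrefl _ hQPz
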